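/- Let n ≥ 1. For every w ∈ W there exists a unique permutation η_w ∈ Sₙ such that Φ_w ∩ Φ⁺⁰ = Φ_{η_w}. -/

import Mathlib

open Pointwise

/-- The `i`-th standard basis vector of `ℤⁿ`. -/
def stdBasis (n : ℕ) (i : Fin n) : Fin n → ℤ := Pi.single i 1

/-- The positive roots of type `Cₙ`: `eᵢ - eⱼ` for `i < j` and `eᵢ + eⱼ` for `i ≤ j`. -/
def PhiPos (n : ℕ) : Set (Fin n → ℤ) :=
  {v | ∃ i j : Fin n, i < j ∧ v = stdBasis n i - stdBasis n j} ∪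
  {v | ∃ i j : Fin n, i ≤ j ∧ v = stdBasis n i + stdBasis n j}

/-- Membership in the hyperoctahedral group `W`: a linear automorphism of `ℤⁿ` sending each
standard basis vector to `±` a standard basis vector. -/
def IsSigned {n : ℕ} (w : (Fin n → ℤ) ≃ₗ[ℤ] (Fin n → ℤ)) : Prop :=
  ∀ j : Fin n, ∃ i : Fin n,
    w (stdBasis n j) = stdBasis n i ∨ w (stdBasis n j) = - stdBasis n i

/-- `Φ_w = w(−Φ⁺) ∩ Φ⁺`. -/
def PhiW {n : ℕ} (w : (Fin n → ℤ) ≃ₗ[ℤ] (Fin n → ℤ)) : Set (Fin n → ℤ) :=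
  (⇑w '' (-(PhiPos n))) ∩ PhiPos n

/-- The permutation `σ` acting linearly on `ℤⁿ` by `eⱼ ↦ e_{σ(j)}`. -/
def permL {n : ℕ} (σ : Equiv.Perm (Fin n)) : (Fin n → ℤ) ≃ₗ[ℤ] (Fin n → ℤ) where
  toFun v := fun i => v (σ.symm i)
  invFun v := fun i => v (σ i)
  map_add' _ _ := rfl
  map_smul' _ _ := rfl
  left_inv v := by funext i; simp
  right_inv v := by funext i; simp


/-- `Φ⁺⁰`: the roots `eᵢ - eⱼ` for `i < j`. -/
def Phi0 (n : ℕ) : Set (Fin n → ℤ) :=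
  {v | ∃ i j : Fin n, i < j ∧ v = stdBasis n i - stdBasis n j}

namespace Stmt5Aux

variable {n : ℕ}

lemma E_apply (i j : Fin n) : stdBasis n i j = if j = i then 1 else 0 :=
  Pi.single_apply i 1 j

lemma sum_E (i : Fin n) : ∑ k, stdBasis n i k = 1 := by
  simp [stdBasis]

lemma sum_mem_PhiPos {v : Fin n → ℤ} (hv : v ∈ PhiPos n) :
    (∑ k, v k) = 0 ∨ (∑ k, v k) = 2 := by
  rcases hv with ⟨i, j, _, rfl⟩ | ⟨i, j, _, rfl⟩
  · left; simp [Finset.sum_sub_distrib, sum_E]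
  · right; simp [Finset.sum_add_distrib, sum_E]

lemma negadd_not_mem (a b : Fin n) : -(stdBasis n a + stdBasis n b) ∉ PhiPos n := by
  intro h
  have := sum_mem_PhiPos h
  simp [Finset.sum_add_distrib, sum_E] at this

lemma add_mem (a b : Fin n) : stdBasis n a + stdBasis n b ∈ PhiPos n := by
  rcases le_total a b with h | h
  · exact Or.inr ⟨a, b, h, rfl⟩
  · exact Or.inr ⟨b, a, h, by rw [add_comm]⟩

lemma diff_eq_diff {a b p q : Fin n} (hab : a ≠ b) (hpq : p ≠ q)
    (h : stdBasis n a - stdBasis n b = stdBasis n p - stdBasis n q) : a = p ∧ b = q := by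
  have ha := congrFun h a
  have hb := congrFun h b
  simp [Pi.sub_apply, E_apply, hab, Ne.symm hab] at ha hb
  constructor
  · by_contra hne
    split_ifs at ha <;> omega
  · by_contra hne
    split_ifs at hb <;> omega

lemma diff_mem_PhiPos {a b : Fin n} (hab : a ≠ b) :
    stdBasis n a - stdBasis n b ∈ PhiPos n ↔ a < b := by
  constructor
  · rintro (⟨p, q, hpq, h⟩ | ⟨p, q, hpq, h⟩)
    · obtain ⟨rfl, rfl⟩ := diff_eq_diff hab (ne_of_lt hpq) h
      exact hpq
    · exfalso
      have := congrArg (fun v => ∑ k, v k) h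
      simp [Finset.sum_sub_distrib, Finset.sum_add_distrib, sum_E] at this
  · intro h
    exact Or.inl ⟨a, b, h, rfl⟩

lemma mem_PhiW {w : (Fin n → ℤ) ≃ₗ[ℤ] (Fin n → ℤ)} {v : Fin n → ℤ} :
    v ∈ PhiW w ↔ v ∈ PhiPos n ∧ -(w.symm v) ∈ PhiPos n := by
  constructor
  · rintro ⟨⟨x, hx, rfl⟩, h2⟩
    refine ⟨h2, ?_⟩
    rw [LinearEquiv.symm_apply_apply]
    exact Set.mem_neg.mp hx
  · rintro ⟨h1, h2⟩
    exact ⟨⟨w.symm v, Set.mem_neg.mpr h2, w.apply_symm_apply v⟩, h1⟩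



lemma exists_perm_data {w : (Fin n → ℤ) ≃ₗ[ℤ] (Fin n → ℤ)} (hw : IsSigned w) :
    ∃ π : Equiv.Perm (Fin n), ∀ i : Fin n,
      w.symm (stdBasis n i) = stdBasis n (π.symm i) ∨
      w.symm (stdBasis n i) = - stdBasis n (π.symm i) := by
  choose p hp using hw
  have hE : ∀ j k : Fin n, j ≠ k → stdBasis n j ≠ stdBasis n k := by
    intro j k hjk h
    have := congrFun h j
    simp [E_apply, hjk] at this
  have hEn : ∀ j k : Fin n, stdBasis n j ≠ - stdBasis n k := by
    intro j k h
    have := congrFun h j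
    simp only [E_apply, Pi.neg_apply, if_pos rfl] at this
    split_ifs at this <;> omega
  have hpinj : Function.Injective p := by
    intro j k hjk
    by_contra hne
    rcases hp j with h1 | h1 <;> rcases hp k with h2 | h2
    · exact hE j k hne (w.injective (h1.trans (hjk ▸ h2.symm)))
    · have : w (stdBasis n j) = - w (stdBasis n k) := by rw [h1, h2, hjk, neg_neg]
      rw [← map_neg] at this
      exact hEn j k (w.injective this)
    · have : w (stdBasis n j) = - w (stdBasis n k) := by rw [h1, h2, hjk]
      rw [← map_neg] at this
      exact hEn j k (w.injective this)
    · have : w (stdBasis n j) = w (stdBasis n k) := by rw [h1, h2, hjk]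
      exact hE j k hne (w.injective this)
  let π : Equiv.Perm (Fin n) := Equiv.ofBijective p (Finite.injective_iff_bijective.mp hpinj)
  refine ⟨π, fun i => ?_⟩
  have hpx : p (π.symm i) = i := π.apply_symm_apply i
  rcases hp (π.symm i) with h | h
  · left
    rw [hpx] at h
    rw [← h, LinearEquiv.symm_apply_apply]
  · right
    rw [hpx] at h
    have := congrArg w.symm h
    rw [LinearEquiv.symm_apply_apply, map_neg] at this
    rw [eq_comm, neg_eq_iff_eq_neg, eq_comm] at this
    exact this.symm

lemma permL_symm_apply (σ : Equiv.Perm (Fin n)) (i : Fin n) :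
    (permL σ).symm (stdBasis n i) = stdBasis n (σ.symm i) := by
  funext k
  show stdBasis n i (σ k) = stdBasis n (σ.symm i) k
  simp only [E_apply]
  congr 1
  simp [eq_comm, Equiv.eq_symm_apply, Equiv.apply_eq_iff_eq_symm_apply]

lemma mem_PhiW_char {w : (Fin n → ℤ) ≃ₗ[ℤ] (Fin n → ℤ)} {π : Equiv.Perm (Fin n)}
    {g : Fin n → ℤ}
    (hg : ∀ i, (w.symm (stdBasis n i) = stdBasis n (π.symm i) ∧ g i = ((π.symm i : ℕ) : ℤ)) ∨
           (w.symm (stdBasis n i) = - stdBasis n (π.symm i) ∧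
             g i = 2*(n:ℤ) - ((π.symm i : ℕ) : ℤ)))
    {i j : Fin n} (hij : i < j) :
    stdBasis n i - stdBasis n j ∈ PhiW w ↔ g j < g i := by
  have hine : i ≠ j := ne_of_lt hij
  have hab : π.symm i ≠ π.symm j := fun h => hine (π.symm.injective h)
  have hia := (π.symm i).isLt
  have hjb := (π.symm j).isLt
  rw [mem_PhiW]
  have h1 : stdBasis n i - stdBasis n j ∈ PhiPos n := (diff_mem_PhiPos hine).mpr hij
  rw [map_sub]
  simp only [h1, true_and]
  rcases hg i with ⟨hi, hgi⟩ | ⟨hi, hgi⟩ <;> rcases hg j with ⟨hj, hgj⟩ | ⟨hj, hgj⟩ <;>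
      rw [hi, hj, hgi, hgj]
  · rw [neg_sub, diff_mem_PhiPos (Ne.symm hab), Fin.lt_def]
    constructor <;> intro h <;> omega
  · rw [sub_neg_eq_add]
    constructor
    · intro h; exact absurd h (negadd_not_mem _ _)
    · intro h; omega
  · rw [neg_sub, sub_neg_eq_add, add_comm]
    constructor
    · intro _; omega
    · intro _; exact add_mem _ _
  · have he : -(-stdBasis n (π.symm i) - -stdBasis n (π.symm j)) =
        stdBasis n (π.symm i) - stdBasis n (π.symm j) := by ring
    rw [he, diff_mem_PhiPos hab, Fin.lt_def]
    constructor <;> intro h <;> omega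

end Stmt5Aux

open Stmt5Aux in
theorem stmt5 (n : ℕ) (hn : 1 ≤ n) (w : (Fin n → ℤ) ≃ₗ[ℤ] (Fin n → ℤ)) (hw : IsSigned w) :
    ∃! η : Equiv.Perm (Fin n), PhiW w ∩ Phi0 n = PhiW (permL η) := by
  classical
  obtain ⟨π, hsym⟩ := exists_perm_data hw
  set g : Fin n → ℤ := fun i =>
    if w.symm (stdBasis n i) = stdBasis n (π.symm i) then ((π.symm i : ℕ) : ℤ)
    else 2*(n:ℤ) - ((π.symm i : ℕ) : ℤ) with hgdef
  have hg : ∀ i, (w.symm (stdBasis n i) = stdBasis n (π.symm i) ∧ g i = ((π.symm i : ℕ) : ℤ)) ∨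
      (w.symm (stdBasis n i) = - stdBasis n (π.symm i) ∧
        g i = 2*(n:ℤ) - ((π.symm i : ℕ) : ℤ)) := by
    intro i
    by_cases h : w.symm (stdBasis n i) = stdBasis n (π.symm i)
    · exact Or.inl ⟨h, by simp only [hgdef]; rw [if_pos h]⟩
    · exact Or.inr ⟨(hsym i).resolve_left h, by simp only [hgdef]; rw [if_neg h]⟩
  have hginj : Function.Injective g := by
    intro i j hgij
    have hia := (π.symm i).isLt
    have hjb := (π.symm j).isLt
    have hval : π.symm i = π.symm j := by
      rcases hg i with ⟨_, hi⟩ | ⟨_, hi⟩ <;> rcases hg j with ⟨_, hj⟩ | ⟨_, hj⟩ <;>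
        rw [hi, hj] at hgij <;> exact Fin.ext (by omega)
    exact π.symm.injective hval
  have hcard : (Finset.image g Finset.univ).card = n := by
    rw [Finset.card_image_of_injective _ hginj, Finset.card_univ, Fintype.card_fin]
  set oi := (Finset.image g Finset.univ).orderIsoOfFin hcard with hoi
  set q : Fin n → Fin n :=
    fun i => oi.symm ⟨g i, Finset.mem_image_of_mem g (Finset.mem_univ i)⟩ with hqdef
  have hqlt : ∀ i j, q i < q j ↔ g i < g j := by
    intro i j
    simp only [hqdef]
    rw [oi.symm.lt_iff_lt]
    exact Subtype.mk_lt_mk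
  have hqinj : Function.Injective q := by
    intro i j h
    apply hginj
    rcases lt_trichotomy (g i) (g j) with hl | hl | hl
    · have := (hqlt i j).mpr hl
      rw [h] at this
      exact absurd this (lt_irrefl _)
    · exact hl
    · have := (hqlt j i).mpr hl
      rw [h] at this
      exact absurd this (lt_irrefl _)
  have hqbij := Finite.injective_iff_bijective.mp hqinj
  set η : Equiv.Perm (Fin n) := (Equiv.ofBijective q hqbij).symm with hη
  have hηs : ∀ i, η.symm i = q i := fun i => rfl
  have charP : ∀ (σ : Equiv.Perm (Fin n)) {i j : Fin n}, i < j →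
      (stdBasis n i - stdBasis n j ∈ PhiW (permL σ) ↔ σ.symm j < σ.symm i) := by
    intro σ i j hij
    have hc := mem_PhiW_char (w := permL σ) (π := σ)
      (g := fun k => ((σ.symm k : ℕ) : ℤ))
      (fun k => Or.inl ⟨permL_symm_apply σ k, rfl⟩) hij
    rw [hc]
    show ((σ.symm j : ℕ) : ℤ) < ((σ.symm i : ℕ) : ℤ) ↔ σ.symm j < σ.symm i
    rw [Fin.lt_def]
    exact Int.ofNat_lt
  have hqg : ∀ i j : Fin n, η.symm j < η.symm i ↔ g j < g i := by
    intro i j; rw [hηs, hηs]; exact hqlt j i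
  have heq : PhiW w ∩ Phi0 n = PhiW (permL η) := by
    ext v
    constructor
    · rintro ⟨hvw, i, j, hij, rfl⟩
      rw [charP η hij, hqg]
      exact (mem_PhiW_char hg hij).mp hvw
    · intro hv
      have hv0 : v ∈ Phi0 n := by
        rcases hv.2 with h0 | ⟨p, q', hpq, rfl⟩
        · exact h0
        · exfalso
          have h2 := (mem_PhiW.mp hv).2
          rw [map_add, permL_symm_apply, permL_symm_apply] at h2
          exact negadd_not_mem _ _ h2
      obtain ⟨i, j, hij, rfl⟩ := hv0
      refine ⟨?_, i, j, hij, rfl⟩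
      rw [mem_PhiW_char hg hij, ← hqg]
      rw [charP η hij] at hv
      exact hv
  refine ⟨η, heq, ?_⟩
  intro η' hη'
  have hiff : ∀ {i j : Fin n}, i < j → (η'.symm j < η'.symm i ↔ η.symm j < η.symm i) := by
    intro i j hij
    rw [← charP η' hij, ← charP η hij, ← hη', ← heq]
  have hmono : StrictMono (fun a => η.symm (η' a)) := by
    intro a b hab
    simp only
    rcases lt_trichotomy (η' a) (η' b) with hl | hl | hl
    · have h1 : ¬ η'.symm (η' b) < η'.symm (η' a) := by
        simp only [Equiv.symm_apply_apply]
        exact not_lt.mpr hab.le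
      have h2 : ¬ η.symm (η' b) < η.symm (η' a) := fun hc => h1 ((hiff hl).mpr hc)
      have hne : η.symm (η' a) ≠ η.symm (η' b) :=
        fun h => (ne_of_lt hab) (η'.injective (η.symm.injective h))
      exact (Ne.lt_or_gt hne).resolve_right h2
    · exact absurd (η'.injective hl) (ne_of_lt hab)
    · exact (hiff hl).mp (by simp only [Equiv.symm_apply_apply]; exact hab)
  have hsurj : Function.Surjective (fun a => η.symm (η' a)) :=
    (η'.trans η.symm).surjective
  have : WellFoundedLT (Fin n) := Finite.to_wellFoundedLT
  have hfid : (fun a => η.symm (η' a)) = id :=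
    (hmono.range_inj strictMono_id).mp (by rw [Set.range_id, hsurj.range_eq])
  refine Equiv.ext fun a => ?_
  have h3 := congrFun hfid a
  have h4 := congrArg η h3
  rw [Equiv.apply_symm_apply] at h4
  exact h4
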